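/- Let μ₁, μ₂ be probability measures on a locally compact abelian group X with character group Y, α a continuous automorphism of X with adjoint α̃, and suppose the characteristic functions satisfy μ̂₁(u+v)·μ̂₂(u+α̃v) = μ̂₁(u−v)·μ̂₂(u−α̃v) for all u, v ∈ Y. Then they also satisfy μ̂₁((I+α̃)u + 2v)·μ̂₂(2α̃u + (I+α̃)v) = μ̂₁((I+α̃)u)·μ̂₂(2α̃u)·μ̂₁(2v)·μ̂₂((I+α̃)v) for all u, v ∈ Y. -/

import Mathlib

open MeasureTheory

/-- The characteristic function of a measure `μ` on a group `X`, evaluated at a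
character `y` of `X`. -/
noncomputable def cf {X : Type*} [AddCommGroup X] [MeasurableSpace X]
    (μ : Measure X) (y : AddChar X Circle) : ℂ :=
  ∫ x, (y x : ℂ) ∂μ

lemma cf_one {X : Type*} [AddCommGroup X] [MeasurableSpace X]
    (μ : Measure X) [IsProbabilityMeasure μ] : cf μ 1 = 1 := by
  simp [cf]

/-- If the characteristic functions of `μ₁, μ₂` satisfy the Heyde equation
`μ̂₁(u+v)μ̂₂(u+α̃v) = μ̂₁(u−v)μ̂₂(u−α̃v)`, then they satisfy
`μ̂₁((I+α̃)u + 2v)μ̂₂(2α̃u + (I+α̃)v) = μ̂₁((I+α̃)u)μ̂₂(2α̃u)μ̂₁(2v)μ̂₂((I+α̃)v)`.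
Characters are written multiplicatively: `u + v` is `u * v`, `2v` is `v * v`,
`(I+α̃)u` is `u * α̃u`. -/
theorem heyde_equation_implies_skitovich_type_equation {X : Type*} [AddCommGroup X]
    [TopologicalSpace X] [IsTopologicalAddGroup X] [LocallyCompactSpace X]
    [MeasurableSpace X] [BorelSpace X]
    (μ₁ μ₂ : Measure X) [IsProbabilityMeasure μ₁] [IsProbabilityMeasure μ₂]
    (α : X ≃+ X) (hα : Continuous α) (hα' : Continuous α.symm)
    (αt : AddChar X Circle → AddChar X Circle)
    (hadj : ∀ (y : AddChar X Circle) (x : X), αt y x = y (α x))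
    (heq : ∀ u v : AddChar X Circle,
      cf μ₁ (u * v) * cf μ₂ (u * αt v) = cf μ₁ (u / v) * cf μ₂ (u / αt v)) :
    ∀ u v : AddChar X Circle,
      cf μ₁ ((u * αt u) * (v * v)) * cf μ₂ ((αt u * αt u) * (v * αt v)) =
      cf μ₁ (u * αt u) * cf μ₂ (αt u * αt u) * cf μ₁ (v * v) * cf μ₂ (v * αt v) := by
  have hmul : ∀ a b : AddChar X Circle, αt (a * b) = αt a * αt b := by
    intro a b
    ext x
    rw [AddChar.mul_apply, hadj, hadj, hadj, AddChar.mul_apply]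
  intro u v
  have h1 := heq (αt u * v) (u * v)
  have h2 := heq (αt u) u
  have h3 := heq v v
  rw [hmul] at h1
  have e1 : αt u * v * (u * v) = u * αt u * (v * v) := by
    simp [mul_comm, mul_assoc, mul_left_comm]
  have e2 : αt u * v * (αt u * αt v) = αt u * αt u * (v * αt v) := by
    simp [mul_comm, mul_assoc, mul_left_comm]
  have e3 : αt u * v / (u * v) = αt u / u := by
    rw [mul_div_mul_right_eq_div]
  have e4 : αt u * v / (αt u * αt v) = v / αt v := by
    simp [div_eq_mul_inv, mul_inv, mul_comm, mul_assoc, mul_left_comm]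
  rw [e1, e2, e3, e4] at h1
  rw [h1]
  rw [div_self', cf_one, mul_one, mul_comm (αt u) u] at h2
  rw [div_self', cf_one, one_mul] at h3
  rw [← h2, ← h3]
  ring
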